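/- Let W(k) be a sequence of stochastic matrices and suppose there is ε > 0 such that for every k there exists m > k with all entries of Φ(m,k) = W(m-1)⋯W(k) at least ε. Then every solution x(k) of the recurrent inequality x(k+1) ≤ W(k)·x(k) that is bounded from below converges to a consensus point c·𝟙 for some c ∈ ℝ. -/
import Mathlib


open Matrix Finset Filter Topology

def Stochastic {n : ℕ} (W : Matrix (Fin n) (Fin n) ℝ) : Prop :=
  (∀ i j, 0 ≤ W i j) ∧ ∀ i, ∑ j, W i j = 1

noncomputable def vmax {n : ℕ} (hn : 0 < n) (x : Fin n → ℝ) : ℝ :=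
  Finset.univ.sup' ⟨⟨0, hn⟩, Finset.mem_univ _⟩ x

noncomputable def vmin {n : ℕ} (hn : 0 < n) (x : Fin n → ℝ) : ℝ :=
  Finset.univ.inf' ⟨⟨0, hn⟩, Finset.mem_univ _⟩ x

def Phi {n : ℕ} (W : ℕ → Matrix (Fin n) (Fin n) ℝ) (k : ℕ) : ℕ → Matrix (Fin n) (Fin n) ℝ
  | 0 => 1
  | j + 1 => W (k + j) * Phi W k j

lemma stoch_one {n : ℕ} : Stochastic (1 : Matrix (Fin n) (Fin n) ℝ) := by
  constructor
  · intro i j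
    by_cases h : i = j <;> simp [Matrix.one_apply, h]
  · intro i
    simp [Matrix.one_apply]

lemma stoch_mul {n : ℕ} {A B : Matrix (Fin n) (Fin n) ℝ}
    (hA : Stochastic A) (hB : Stochastic B) : Stochastic (A * B) := by
  constructor
  · intro i j
    rw [Matrix.mul_apply]
    exact Finset.sum_nonneg fun l _ => mul_nonneg (hA.1 i l) (hB.1 l j)
  · intro i
    simp only [Matrix.mul_apply]
    rw [Finset.sum_comm]
    calc ∑ l, ∑ j, A i l * B l j = ∑ l, A i l * ∑ j, B l j := by
          simp [Finset.mul_sum]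
      _ = 1 := by simp [hB.2, hA.2 i]

lemma stoch_Phi {n : ℕ} (W : ℕ → Matrix (Fin n) (Fin n) ℝ)
    (hW : ∀ k, Stochastic (W k)) (k : ℕ) : ∀ j, Stochastic (Phi W k j) := by
  intro j
  induction j with
  | zero => exact stoch_one
  | succ j ih => exact stoch_mul (hW (k + j)) ih

lemma mulVec_mono {n : ℕ} {A : Matrix (Fin n) (Fin n) ℝ}
    (hA : ∀ i j, 0 ≤ A i j) {v w : Fin n → ℝ} (h : v ≤ w) :
    A.mulVec v ≤ A.mulVec w := by
  intro i
  show ∑ j, A i j * v j ≤ ∑ j, A i j * w j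
  exact Finset.sum_le_sum fun j _ => mul_le_mul_of_nonneg_left (h j) (hA i j)

lemma le_Phi_mulVec {n : ℕ} (W : ℕ → Matrix (Fin n) (Fin n) ℝ)
    (hW : ∀ k, Stochastic (W k)) (x : ℕ → Fin n → ℝ)
    (hx : ∀ k, x (k + 1) ≤ (W k).mulVec (x k)) (k : ℕ) :
    ∀ j, x (k + j) ≤ (Phi W k j).mulVec (x k) := by
  intro j
  induction j with
  | zero => simp [Phi]
  | succ j ih =>
    have h1 : x (k + j + 1) ≤ (W (k + j)).mulVec (x (k + j)) := hx (k + j)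
    have h2 : (W (k + j)).mulVec (x (k + j)) ≤
        (W (k + j)).mulVec ((Phi W k j).mulVec (x k)) :=
      mulVec_mono (hW (k + j)).1 ih
    have h3 : (W (k + j)).mulVec ((Phi W k j).mulVec (x k)) =
        (Phi W k (j + 1)).mulVec (x k) := by
      rw [show Phi W k (j + 1) = W (k + j) * Phi W k j from rfl, ← Matrix.mulVec_mulVec]
    calc x (k + (j + 1)) = x (k + j + 1) := by ring_nf
      _ ≤ _ := h1
      _ ≤ _ := h2
      _ = _ := h3

lemma le_vmax {n : ℕ} (hn : 0 < n) (v : Fin n → ℝ) (j : Fin n) : v j ≤ vmax hn v :=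
  Finset.le_sup' v (Finset.mem_univ j)

lemma vmin_le {n : ℕ} (hn : 0 < n) (v : Fin n → ℝ) (j : Fin n) : vmin hn v ≤ v j :=
  Finset.inf'_le v (Finset.mem_univ j)

lemma mulVec_le_vmax {n : ℕ} (hn : 0 < n) {A : Matrix (Fin n) (Fin n) ℝ}
    (hA : Stochastic A) (v : Fin n → ℝ) (i : Fin n) : A.mulVec v i ≤ vmax hn v := by
  have : A.mulVec v i = ∑ j, A i j * v j := rfl
  rw [this]
  calc ∑ j, A i j * v j ≤ ∑ j, A i j * vmax hn v :=
        Finset.sum_le_sum fun j _ =>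
          mul_le_mul_of_nonneg_left (le_vmax hn v j) (hA.1 i j)
    _ = vmax hn v := by rw [← Finset.sum_mul, hA.2 i, one_mul]

lemma mulVec_contract {n : ℕ} (hn : 0 < n) {A : Matrix (Fin n) (Fin n) ℝ}
    (hA : Stochastic A) {ε : ℝ} (hεA : ∀ i j, ε ≤ A i j) (v : Fin n → ℝ) (i : Fin n) :
    A.mulVec v i ≤ vmax hn v - ε * (vmax hn v - vmin hn v) := by
  obtain ⟨j₀, -, hj₀⟩ :=
    Finset.exists_mem_eq_inf' (⟨⟨0, hn⟩, Finset.mem_univ _⟩ : Finset.univ.Nonempty) v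
  have hmM : vmin hn v ≤ vmax hn v := (vmin_le hn v ⟨0, hn⟩).trans (le_vmax hn v ⟨0, hn⟩)
  have key : A.mulVec v i = A i j₀ * v j₀ + ∑ j ∈ Finset.univ.erase j₀, A i j * v j := by
    rw [show A.mulVec v i = ∑ j, A i j * v j from rfl,
      ← Finset.add_sum_erase _ _ (Finset.mem_univ j₀)]
  have h1 : ∑ j ∈ Finset.univ.erase j₀, A i j * v j ≤
      (∑ j ∈ Finset.univ.erase j₀, A i j) * vmax hn v := by
    rw [Finset.sum_mul]
    exact Finset.sum_le_sum fun j _ =>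
      mul_le_mul_of_nonneg_left (le_vmax hn v j) (hA.1 i j)
  have h2 : ∑ j ∈ Finset.univ.erase j₀, A i j = 1 - A i j₀ := by
    have h := hA.2 i
    rw [← Finset.add_sum_erase _ _ (Finset.mem_univ j₀)] at h
    linarith
  have hvj₀ : v j₀ = vmin hn v := hj₀.symm
  have hεj : ε ≤ A i j₀ := hεA i j₀
  rw [h2] at h1
  rw [key, hvj₀]
  nlinarith [h1, hmM, hεj]

theorem stmt12 {n : ℕ} (W : ℕ → Matrix (Fin n) (Fin n) ℝ)
    (hW : ∀ k, Stochastic (W k)) (ε : ℝ) (hε : 0 < ε)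
    (hΦ : ∀ k, ∃ m > k, ∀ i j, ε ≤ Phi W k (m - k) i j)
    (x : ℕ → Fin n → ℝ) (hx : ∀ k, x (k + 1) ≤ (W k).mulVec (x k))
    (hbdd : ∃ c, ∀ k i, c ≤ x k i) :
    ∃ c : ℝ, Tendsto (fun k => x k) atTop (𝓝 fun _ => c) := by
  rcases Nat.eq_zero_or_pos n with hn | hn
  · subst hn
    refine ⟨0, ?_⟩
    have hx0 : (fun k => x k) = fun _ => (fun i : Fin 0 => (0 : ℝ)) :=
      funext fun k => funext fun i => i.elim0
    rw [hx0]
    exact tendsto_const_nhds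
  obtain ⟨c, hc⟩ := hbdd
  set M : ℕ → ℝ := fun k => vmax hn (x k) with hM
  set m' : ℕ → ℝ := fun k => vmin hn (x k) with hm'
  have hMdec : ∀ k, M (k + 1) ≤ M k := by
    intro k
    refine Finset.sup'_le _ _ fun i _ => ?_
    exact (hx k i).trans (mulVec_le_vmax hn (hW k) (x k) i)
  have hanti : Antitone M := antitone_nat_of_succ_le hMdec
  have hMbdd : ∀ k, c ≤ M k := fun k => (hc k ⟨0, hn⟩).trans (le_vmax hn (x k) ⟨0, hn⟩)
  set L : ℝ := ⨅ k, M k with hLdef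
  have hbddBelow : BddBelow (Set.range M) := ⟨c, by rintro _ ⟨k, rfl⟩; exact hMbdd k⟩
  have hLM : ∀ k, L ≤ M k := fun k => ciInf_le hbddBelow k
  have hMtend : Tendsto M atTop (𝓝 L) := tendsto_atTop_ciInf hanti hbddBelow
  -- key contraction estimate
  have hkey : ∀ k, ε * (M k - m' k) ≤ M k - L := by
    intro k
    obtain ⟨m, hmk, hΦε⟩ := hΦ k
    have hxm : x m ≤ (Phi W k (m - k)).mulVec (x k) := by
      have := le_Phi_mulVec W hW x hx k (m - k)
      rwa [Nat.add_sub_cancel' hmk.le] at this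
    have hΦs : Stochastic (Phi W k (m - k)) := stoch_Phi W hW k (m - k)
    have hMm : M m ≤ M k - ε * (M k - m' k) := by
      refine Finset.sup'_le _ _ fun i _ => ?_
      exact (hxm i).trans (mulVec_contract hn hΦs hΦε (x k) i)
    have := hLM m
    linarith
  have hlow : ∀ k, M k - (M k - L) / ε ≤ m' k := by
    intro k
    have := hkey k
    have h2 : M k - m' k ≤ (M k - L) / ε := by
      rw [le_div_iff₀ hε]
      linarith
    linarith
  -- limit of lower bound function
  have hgtend : Tendsto (fun k => M k - (M k - L) / ε) atTop (𝓝 L) := by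
    have : Tendsto (fun k => M k - (M k - L) / ε) atTop (𝓝 (L - (L - L) / ε)) :=
      hMtend.sub ((hMtend.sub tendsto_const_nhds).div_const ε)
    simpa using this
  refine ⟨L, ?_⟩
  rw [tendsto_pi_nhds]
  intro i
  refine tendsto_of_tendsto_of_tendsto_of_le_of_le hgtend hMtend ?_ ?_
  · intro k
    exact (hlow k).trans (vmin_le hn (x k) i)
  · intro k
    exact le_vmax hn (x k) i
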